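/- Let T be a bounded linear operator on a Banach space B whose powers are uniformly bounded by C, let λ₁,…,λ_k be distinct complex numbers of modulus 1 with λ₁ = 1, let T_{λ₁},…,T_{λ_k} be bounded operators with T_{λ_i} T_{λ_j} = T_{λ_i} if i = j and 0 otherwise, and let S := T − ∑_i T_{λ_i} satisfy T^n = S^n + ∑_i λ_i^n T_{λ_i} for all n ≥ 1 together with ‖S^n‖ ≤ M/(1+ε)^n. Then (1/n)∑_{i=1}^n T^i converges in operator norm to T_{λ₁} = T₁, with error bounded by a constant times 1/n. -/

import Mathlib

set_option maxHeartbeats 1000000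

open Finset Filter


/-- Under the spectral decomposition `T^n = S^n + ∑_i λ_i^n T_{λ_i}` with distinct unimodular
`λ_i`, `λ_1 = 1`, projections `T_{λ_i} T_{λ_j} = δ_{ij} T_{λ_i}`, uniformly bounded powers of `T`,
and `‖S^n‖ ≤ M/(1+ε)^n`, the Cesàro averages `(1/n) ∑_{i=1}^n T^i` converge in operator norm
to `T_{λ_1} = T₁` with error `O(1/n)`. -/
theorem cesaro_to_spectral_projection
    {B : Type*} [NormedAddCommGroup B] [NormedSpace ℂ B] [CompleteSpace B]
    (T S : B →L[ℂ] B) (k : ℕ) (hk : 0 < k)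
    (lam : Fin k → ℂ) (Tl : Fin k → B →L[ℂ] B)
    (hinj : Function.Injective lam) (hmod : ∀ i, ‖lam i‖ = 1)
    (hlam0 : lam ⟨0, hk⟩ = 1)
    (C M ε : ℝ) (hM : 0 < M) (hε : 0 < ε)
    (hC : ∀ n : ℕ, ‖T ^ n‖ ≤ C)
    (hdecomp : ∀ n : ℕ, 1 ≤ n → T ^ n = S ^ n + ∑ i, (lam i ^ n) • Tl i)
    (horth : ∀ i j, (Tl i).comp (Tl j) = if i = j then Tl i else 0)
    (hS : ∀ n : ℕ, 1 ≤ n → ‖S ^ n‖ ≤ M / (1 + ε) ^ n) :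
    Filter.Tendsto (fun n : ℕ => (n : ℝ)⁻¹ • ∑ i ∈ Finset.range n, T ^ (i + 1))
      Filter.atTop (nhds (Tl ⟨0, hk⟩)) ∧
    ∃ M' : ℝ, ∀ n : ℕ, 1 ≤ n →
      ‖(n : ℝ)⁻¹ • ∑ i ∈ Finset.range n, T ^ (i + 1) - Tl ⟨0, hk⟩‖ ≤ M' / n := by
  classical
  set p0 : Fin k := ⟨0, hk⟩ with hp0
  set M' : ℝ := M / ε + ∑ i ∈ Finset.univ.erase p0, 2 / ‖lam i - 1‖ * ‖Tl i‖ with hM'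
  have key : ∀ n : ℕ, 1 ≤ n →
      ‖(n : ℝ)⁻¹ • ∑ m ∈ Finset.range n, T ^ (m + 1) - Tl p0‖ ≤ M' / n := by
    intro n hn
    have hnR : (0:ℝ) < (n:ℝ) := by exact_mod_cast hn
    have hnC : (n : ℂ) ≠ 0 := Nat.cast_ne_zero.mpr (Nat.one_le_iff_ne_zero.mp hn)
    -- the main algebraic identity
    have h1 : ∑ m ∈ Finset.range n, T ^ (m + 1)
        = ∑ m ∈ Finset.range n, S ^ (m + 1)
          + ((n : ℂ) • Tl p0
            + ∑ i ∈ Finset.univ.erase p0,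
                (∑ m ∈ Finset.range n, lam i ^ (m + 1)) • Tl i) := by
      have h2 : ∑ m ∈ Finset.range n, T ^ (m + 1)
          = ∑ m ∈ Finset.range n, (S ^ (m + 1) + ∑ i, (lam i ^ (m+1)) • Tl i) :=
        Finset.sum_congr rfl fun m _ => hdecomp (m+1) (Nat.le_add_left 1 m)
      rw [h2, Finset.sum_add_distrib]
      congr 1
      rw [Finset.sum_comm]
      have h3 : ∀ i : Fin k, ∑ m ∈ Finset.range n, (lam i ^ (m+1)) • Tl i
          = (∑ m ∈ Finset.range n, lam i ^ (m + 1)) • Tl i := by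
        intro i; rw [Finset.sum_smul]
      rw [Finset.sum_congr rfl fun i _ => h3 i,
        ← Finset.add_sum_erase _ _ (Finset.mem_univ p0)]
      congr 2
      simp [hlam0]
    have h4 : (n : ℝ)⁻¹ • ((n : ℂ) • Tl p0) = Tl p0 := by
      rw [← algebraMap_smul ℂ ((n:ℝ)⁻¹) (((n : ℂ)) • Tl p0), smul_smul]
      have : (algebraMap ℝ ℂ (n:ℝ)⁻¹) * (n : ℂ) = 1 := by
        simp [Complex.coe_algebraMap]; field_simp
      rw [this, one_smul]
    have hid : (n : ℝ)⁻¹ • ∑ m ∈ Finset.range n, T ^ (m + 1) - Tl p0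
        = (n : ℝ)⁻¹ • ∑ m ∈ Finset.range n, S ^ (m + 1)
          + ∑ i ∈ Finset.univ.erase p0,
              (n : ℝ)⁻¹ • ((∑ m ∈ Finset.range n, lam i ^ (m + 1)) • Tl i) := by
      rw [h1, smul_add, smul_add, h4, add_sub_assoc, add_sub_cancel_left]
      congr 1
      exact Finset.smul_sum
    -- bound on the S-part
    have hr1 : (1:ℝ) < 1 + ε := by linarith
    set r : ℝ := (1 + ε)⁻¹ with hrdef
    have hr0 : 0 ≤ r := by positivity
    have hrlt : r < 1 := inv_lt_one_of_one_lt₀ hr1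
    have hgsum : ∑ m ∈ Finset.range n, r ^ m ≤ (1 - r)⁻¹ := by
      refine Summable.sum_le_tsum (Finset.range n) (fun m _ => by positivity)
        ⟨_, hasSum_geometric_of_lt_one hr0 hrlt⟩ |>.trans_eq ?_
      exact tsum_geometric_of_lt_one hr0 hrlt
    have hA : ∑ m ∈ Finset.range n, ‖S ^ (m + 1)‖ ≤ M / ε := by
      calc ∑ m ∈ Finset.range n, ‖S ^ (m + 1)‖
          ≤ ∑ m ∈ Finset.range n, M * r ^ (m + 1) := by
            refine Finset.sum_le_sum fun m _ => ?_
            have := hS (m+1) (Nat.le_add_left 1 m)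
            rw [hrdef, inv_pow]
            rw [div_eq_mul_inv] at this
            exact this
        _ = M * r * ∑ m ∈ Finset.range n, r ^ m := by
            rw [Finset.mul_sum]
            exact Finset.sum_congr rfl fun m _ => by ring
        _ ≤ M * r * (1 - r)⁻¹ :=
            mul_le_mul_of_nonneg_left hgsum (by positivity)
        _ = M / ε := by
            have h10 : (1:ℝ) - r = ε / (1 + ε) := by
              rw [hrdef]; field_simp; ring
            rw [h10, hrdef]
            rw [inv_div]
            have h11 : (1+ε) ≠ 0 := by positivity
            field_simp
    have hSpart : ‖(n : ℝ)⁻¹ • ∑ m ∈ Finset.range n, S ^ (m + 1)‖ ≤ (M / ε) / n := by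
      calc ‖(n : ℝ)⁻¹ • ∑ m ∈ Finset.range n, S ^ (m + 1)‖
          ≤ ‖(n : ℝ)⁻¹‖ * ‖∑ m ∈ Finset.range n, S ^ (m + 1)‖ :=
            (norm_smul ((n:ℝ)⁻¹) (∑ m ∈ Finset.range n, S ^ (m + 1))).le
        _ ≤ (n:ℝ)⁻¹ * (M / ε) := by
            rw [norm_inv, Real.norm_natCast]
            exact mul_le_mul_of_nonneg_left ((norm_sum_le _ _).trans hA) (by positivity)
        _ = (M / ε) / n := inv_mul_eq_div _ _
    -- bound on the geometric parts
    have hterm : ∀ i ∈ Finset.univ.erase p0,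
        ‖(n : ℝ)⁻¹ • ((∑ m ∈ Finset.range n, lam i ^ (m + 1)) • Tl i)‖
          ≤ (2 / ‖lam i - 1‖ * ‖Tl i‖) / n := by
      intro i hi
      have hne : lam i ≠ 1 := by
        intro h
        exact (Finset.mem_erase.mp hi).1 (hinj (h.trans hlam0.symm))
      have hnormlam : ‖lam i‖ = 1 := by exact hmod i
      have hsub : (0:ℝ) < ‖lam i - 1‖ := by
        rw [norm_pos_iff]; exact sub_ne_zero_of_ne hne
      have hg : ‖∑ m ∈ Finset.range n, lam i ^ (m + 1)‖ ≤ 2 / ‖lam i - 1‖ := by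
        have h5 : ∑ m ∈ Finset.range n, lam i ^ (m + 1)
            = lam i * ((lam i ^ n - 1) / (lam i - 1)) := by
          rw [← geom_sum_eq hne n, Finset.mul_sum]
          exact Finset.sum_congr rfl fun m _ => by ring
        rw [h5, norm_mul, hnormlam, one_mul, norm_div]
        gcongr
        calc ‖lam i ^ n - 1‖ ≤ ‖lam i ^ n‖ + ‖(1:ℂ)‖ := norm_sub_le _ _
          _ = 2 := by rw [norm_pow, hnormlam]; norm_num
      calc ‖(n : ℝ)⁻¹ • ((∑ m ∈ Finset.range n, lam i ^ (m + 1)) • Tl i)‖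
          ≤ ‖(n : ℝ)⁻¹‖ * ‖(∑ m ∈ Finset.range n, lam i ^ (m + 1)) • Tl i‖ :=
            (norm_smul ((n:ℝ)⁻¹) ((∑ m ∈ Finset.range n, lam i ^ (m + 1)) • Tl i)).le
        _ ≤ (n:ℝ)⁻¹ * (‖∑ m ∈ Finset.range n, lam i ^ (m + 1)‖ * ‖Tl i‖) := by
            rw [norm_inv, Real.norm_natCast]
            exact mul_le_mul_of_nonneg_left
              (norm_smul (∑ m ∈ Finset.range n, lam i ^ (m + 1)) (Tl i)).le (by positivity)
        _ ≤ (n:ℝ)⁻¹ * (2 / ‖lam i - 1‖ * ‖Tl i‖) := by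
            have := mul_le_mul_of_nonneg_right hg (norm_nonneg (Tl i))
            exact mul_le_mul_of_nonneg_left this (by positivity)
        _ = (2 / ‖lam i - 1‖ * ‖Tl i‖) / n := inv_mul_eq_div _ _
    calc ‖(n : ℝ)⁻¹ • ∑ m ∈ Finset.range n, T ^ (m + 1) - Tl p0‖
        = ‖(n : ℝ)⁻¹ • ∑ m ∈ Finset.range n, S ^ (m + 1)
            + ∑ i ∈ Finset.univ.erase p0,
                (n : ℝ)⁻¹ • ((∑ m ∈ Finset.range n, lam i ^ (m + 1)) • Tl i)‖ := by
          rw [hid]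
      _ ≤ ‖(n : ℝ)⁻¹ • ∑ m ∈ Finset.range n, S ^ (m + 1)‖
            + ∑ i ∈ Finset.univ.erase p0,
                ‖(n : ℝ)⁻¹ • ((∑ m ∈ Finset.range n, lam i ^ (m + 1)) • Tl i)‖ :=
          (norm_add_le _ _).trans (by gcongr; exact norm_sum_le _ _)
      _ ≤ (M / ε) / n + ∑ i ∈ Finset.univ.erase p0, (2 / ‖lam i - 1‖ * ‖Tl i‖) / n := by
          exact add_le_add hSpart (Finset.sum_le_sum hterm)
      _ = M' / n := by rw [hM', add_div, Finset.sum_div]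
  refine ⟨?_, M', key⟩
  rw [tendsto_iff_norm_sub_tendsto_zero]
  refine squeeze_zero' (Filter.Eventually.of_forall fun n => norm_nonneg _) ?_
    (tendsto_const_div_atTop_nhds_zero_nat M')
  filter_upwards [Filter.eventually_ge_atTop 1] with n hn using key n hn
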